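/- arXiv:1009.0530 — 4 statements merged into one kernel-verified Lean document; each statement's English description precedes it below -/
import Mathlib

section
/- Suppose the restricted eigenvalue condition RE(s₀, k₀, Σ₀) holds with constant K(s₀,k₀,Σ₀), i.e., for every subset J of {1,…,p} with |J| ≤ s₀ and every υ ≠ 0 with ‖υ_{J^c}‖₁ ≤ k₀‖υ_J‖₁ we have ‖Σ₀^{1/2}υ‖₂ ≥ ‖υ_J‖₂ / K(s₀,k₀,Σ₀). Then for m = (k₀+1)s₀, the smallest m-sparse eigenvalue satisfies sqrt(ρ_min(m)) ≥ 1/(sqrt(2+k₀²)·K(s₀,k₀,Σ₀)). -/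
open Matrix

/-- Under the restricted eigenvalue condition `RE(s₀, k₀, S0)` with constant `K`,
every nonzero `(k₀+1)s₀`-sparse vector `t` satisfies
`sqrt(tᵀS0t / ‖t‖₂²) ≥ 1/(sqrt(2+k₀²)·K)`, i.e.
`sqrt(ρ_min((k₀+1)s₀)) ≥ 1/(sqrt(2+k₀²)·K)`. -/
theorem stmt6 {p s₀ k₀ : ℕ} (S0 : Matrix (Fin p) (Fin p) ℝ)
    (hS : S0.PosSemidef) (hs₀ : 1 ≤ s₀) (hk₀ : 0 < k₀)
    (K : ℝ) (hK : 0 < K)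
    (hRE : ∀ J : Finset (Fin p), J.card ≤ s₀ →
      ∀ υ : Fin p → ℝ, υ ≠ 0 →
        (∑ j ∈ Jᶜ, |υ j|) ≤ (k₀ : ℝ) * ∑ j ∈ J, |υ j| →
        Real.sqrt (∑ j ∈ J, υ j ^ 2) / K ≤ Real.sqrt (υ ⬝ᵥ S0.mulVec υ)) :
    ∀ t : Fin p → ℝ, t ≠ 0 → Fintype.card {i // t i ≠ 0} ≤ (k₀ + 1) * s₀ →
      1 / (Real.sqrt (2 + (k₀ : ℝ) ^ 2) * K) ≤
        Real.sqrt ((t ⬝ᵥ S0.mulVec t) / ∑ i, t i ^ 2) := by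
  intro t ht hcard
  classical
  set T : Finset (Fin p) := Finset.univ.filter (fun i => t i ≠ 0) with hTdef
  have ht0 : ∀ j, j ∉ T → t j = 0 := by
    intro j hj; by_contra h; exact hj (by simp [hTdef, h])
  have hTcard : T.card ≤ (k₀ + 1) * s₀ := by
    have h1 : Fintype.card {i // t i ≠ 0} = T.card := by
      simp [hTdef, Fintype.card_subtype]
    omega
  obtain ⟨i0, hi0'⟩ := Function.ne_iff.1 ht
  have hi0 : t i0 ≠ 0 := by simpa using hi0'
  have hTpos : 0 < T.card := Finset.card_pos.2 ⟨i0, by simp [hTdef, hi0]⟩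
  set n := min s₀ T.card with hn
  have hnT : n ≤ T.card := min_le_right _ _
  have hns : n ≤ s₀ := min_le_left _ _
  have hnpos : 0 < n := by omega
  obtain ⟨J0, hJ0sub, hJ0card⟩ := Finset.exists_subset_card_eq (s := T) hnT
  obtain ⟨J, hJmem, hJmax⟩ := Finset.exists_max_image (T.powersetCard n)
    (fun J => ∑ j ∈ J, |t j|) ⟨J0, Finset.mem_powersetCard.2 ⟨hJ0sub, hJ0card⟩⟩
  obtain ⟨hJsub, hJcard⟩ := Finset.mem_powersetCard.1 hJmem
  -- exchange argument
  have hex : ∀ j ∈ T \ J, ∀ i ∈ J, |t j| ≤ |t i| := by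
    intro j hj i hi
    have hjT := (Finset.mem_sdiff.1 hj).1
    have hjJ := (Finset.mem_sdiff.1 hj).2
    have hJpos : 0 < J.card := Finset.card_pos.2 ⟨i, hi⟩
    have hjE : j ∉ J.erase i := fun h => hjJ (Finset.erase_subset _ _ h)
    have hmem' : insert j (J.erase i) ∈ T.powersetCard n := by
      refine Finset.mem_powersetCard.2 ⟨?_, ?_⟩
      · intro x hx
        rcases Finset.mem_insert.1 hx with rfl | hx
        · exact hjT
        · exact hJsub (Finset.erase_subset _ _ hx)
      · rw [Finset.card_insert_of_notMem hjE, Finset.card_erase_of_mem hi]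
        omega
    have hle := hJmax _ hmem'
    rw [Finset.sum_insert hjE] at hle
    have h2 : ∑ x ∈ J.erase i, |t x| = (∑ x ∈ J, |t x|) - |t i| := by
      rw [← Finset.add_sum_erase _ _ hi]; ring
    rw [h2] at hle; linarith
  set S1 : ℝ := ∑ j ∈ J, |t j| with hS1def
  have hS1nonneg : 0 ≤ S1 := Finset.sum_nonneg fun _ _ => abs_nonneg _
  have hkey : ∀ j ∈ T \ J, (n : ℝ) * |t j| ≤ S1 := by
    intro j hj
    calc (n : ℝ) * |t j| = ∑ _i ∈ J, |t j| := by
          rw [Finset.sum_const, hJcard, nsmul_eq_mul]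
      _ ≤ S1 := Finset.sum_le_sum (fun i hi => hex j hj i hi)
  -- bounds on the tail sums
  have habs : ∑ j ∈ T \ J, |t j| ≤ (k₀ : ℝ) * S1 := by
    rcases le_or_gt T.card s₀ with hc | hc
    · have hJT : J = T := Finset.eq_of_subset_of_card_le hJsub (by omega)
      rw [hJT]
      simp only [Finset.sdiff_self, Finset.sum_empty]
      positivity
    · have hns' : n = s₀ := by omega
      have hcard' : (T \ J).card ≤ k₀ * s₀ := by
        have hmul : (k₀ + 1) * s₀ = k₀ * s₀ + s₀ := by ring
        rw [Finset.card_sdiff_of_subset hJsub]; omega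
      have h1 : (n : ℝ) * ∑ j ∈ T \ J, |t j| ≤ (n : ℝ) * ((k₀ : ℝ) * S1) := by
        rw [Finset.mul_sum]
        calc ∑ j ∈ T \ J, (n : ℝ) * |t j| ≤ ∑ _j ∈ T \ J, S1 :=
              Finset.sum_le_sum hkey
          _ = ((T \ J).card : ℝ) * S1 := by rw [Finset.sum_const, nsmul_eq_mul]
          _ ≤ ((k₀ * s₀ : ℕ) : ℝ) * S1 := by
              apply mul_le_mul_of_nonneg_right _ hS1nonneg
              exact_mod_cast hcard'
          _ = (n : ℝ) * ((k₀ : ℝ) * S1) := by rw [hns']; push_cast; ring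
      have hnpos' : (0 : ℝ) < n := by exact_mod_cast hnpos
      exact le_of_mul_le_mul_left h1 hnpos'
  have hS1sq : S1 ^ 2 ≤ (n : ℝ) * ∑ j ∈ J, t j ^ 2 := by
    have h := sq_sum_le_card_mul_sum_sq (s := J) (f := fun j => |t j|)
    simp only [sq_abs] at h
    rw [hS1def]
    calc (∑ j ∈ J, |t j|) ^ 2 ≤ (J.card : ℝ) * ∑ j ∈ J, t j ^ 2 := h
      _ = (n : ℝ) * ∑ j ∈ J, t j ^ 2 := by rw [hJcard]
  have hsq : ∑ j ∈ T \ J, t j ^ 2 ≤ (k₀ : ℝ) * ∑ j ∈ J, t j ^ 2 := by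
    have h1 : (n : ℝ) * ∑ j ∈ T \ J, t j ^ 2 ≤ (k₀ : ℝ) * S1 ^ 2 := by
      rw [Finset.mul_sum]
      calc ∑ j ∈ T \ J, (n : ℝ) * t j ^ 2 ≤ ∑ j ∈ T \ J, S1 * |t j| := by
            apply Finset.sum_le_sum
            intro j hj
            have := hkey j hj
            have habj := abs_nonneg (t j)
            calc (n : ℝ) * t j ^ 2 = ((n : ℝ) * |t j|) * |t j| := by
                  rw [← sq_abs]; ring
              _ ≤ S1 * |t j| := mul_le_mul_of_nonneg_right this habj
        _ = S1 * ∑ j ∈ T \ J, |t j| := by rw [Finset.mul_sum]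
        _ ≤ S1 * ((k₀ : ℝ) * S1) := mul_le_mul_of_nonneg_left habs hS1nonneg
        _ = (k₀ : ℝ) * S1 ^ 2 := by ring
    have h2 : (n : ℝ) * ∑ j ∈ T \ J, t j ^ 2 ≤
        (n : ℝ) * ((k₀ : ℝ) * ∑ j ∈ J, t j ^ 2) := by
      calc (n : ℝ) * ∑ j ∈ T \ J, t j ^ 2 ≤ (k₀ : ℝ) * S1 ^ 2 := h1
        _ ≤ (k₀ : ℝ) * ((n : ℝ) * ∑ j ∈ J, t j ^ 2) := by
            apply mul_le_mul_of_nonneg_left hS1sq (by positivity)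
        _ = (n : ℝ) * ((k₀ : ℝ) * ∑ j ∈ J, t j ^ 2) := by ring
    have hnpos' : (0 : ℝ) < n := by exact_mod_cast hnpos
    exact le_of_mul_le_mul_left h2 hnpos'
  -- the RE condition applies
  have hcompl : ∑ j ∈ Jᶜ, |t j| ≤ (k₀ : ℝ) * S1 := by
    have hsub : T \ J ⊆ Jᶜ := by
      intro j hj
      exact Finset.mem_compl.2 (Finset.mem_sdiff.1 hj).2
    have heq : ∑ j ∈ T \ J, |t j| = ∑ j ∈ Jᶜ, |t j| := by
      apply Finset.sum_subset hsub
      intro x hx hx'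
      have hxT : x ∉ T := by
        intro hxT
        exact hx' (Finset.mem_sdiff.2 ⟨hxT, Finset.mem_compl.1 hx⟩)
      rw [ht0 x hxT, abs_zero]
    rw [← heq]; exact habs
  have hREt := hRE J (by omega) t ht hcompl
  set SJ : ℝ := ∑ j ∈ J, t j ^ 2 with hSJdef
  set Q : ℝ := t ⬝ᵥ S0.mulVec t with hQdef
  have hSJnn : 0 ≤ SJ := Finset.sum_nonneg fun _ _ => sq_nonneg _
  have hQ0 : 0 ≤ Q := by
    have := hS.dotProduct_mulVec_nonneg t
    simpa [hQdef] using this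
  have hSJK : SJ ≤ K ^ 2 * Q := by
    have h2 : Real.sqrt SJ ≤ K * Real.sqrt Q := by
      rw [div_le_iff₀ hK] at hREt; linarith [hREt]
    have h3 := mul_self_le_mul_self (Real.sqrt_nonneg SJ) h2
    rw [Real.mul_self_sqrt hSJnn] at h3
    calc SJ ≤ K * Real.sqrt Q * (K * Real.sqrt Q) := h3
      _ = K ^ 2 * (Real.sqrt Q * Real.sqrt Q) := by ring
      _ = K ^ 2 * Q := by rw [Real.mul_self_sqrt hQ0]
  set N : ℝ := ∑ i, t i ^ 2 with hNdef
  have hNeq : N = SJ + ∑ j ∈ T \ J, t j ^ 2 := by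
    have h1 : ∑ i ∈ T, t i ^ 2 = N := by
      apply Finset.sum_subset (Finset.subset_univ T)
      intro x _ hx
      rw [ht0 x hx]; ring
    rw [← h1, ← Finset.sum_sdiff hJsub, hSJdef]; ring
  have hNpos : 0 < N := by
    apply Finset.sum_pos' (fun _ _ => sq_nonneg _)
    exact ⟨i0, Finset.mem_univ i0, (sq_nonneg _).lt_of_ne (Ne.symm (pow_ne_zero 2 hi0))⟩
  have hNle : N ≤ (2 + (k₀ : ℝ) ^ 2) * (K ^ 2 * Q) := by
    have hk1 : (1 : ℝ) ≤ (k₀ : ℝ) := by exact_mod_cast hk₀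
    have h1 : N ≤ (1 + (k₀ : ℝ)) * SJ := by rw [hNeq]; linarith [hsq]
    nlinarith [sq_nonneg ((k₀ : ℝ) - 1), hSJK, hSJnn, sq_nonneg K, hQ0]
  have hc : (0 : ℝ) < 2 + (k₀ : ℝ) ^ 2 := by positivity
  have hfrac : 1 / ((2 + (k₀ : ℝ) ^ 2) * K ^ 2) ≤ Q / N := by
    rw [div_le_div_iff₀ (by positivity) hNpos]
    nlinarith [hNle]
  calc 1 / (Real.sqrt (2 + (k₀ : ℝ) ^ 2) * K)
      = Real.sqrt (1 / ((2 + (k₀ : ℝ) ^ 2) * K ^ 2)) := by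
        rw [one_div, one_div, Real.sqrt_inv, Real.sqrt_mul hc.le, Real.sqrt_sq hK.le]
    _ ≤ Real.sqrt (Q / N) := Real.sqrt_le_sqrt hfrac
end

section
/- Let Θ₀ be symmetric positive definite and Δ symmetric, with Θ₀ + vΔ positive definite for all v in an open interval containing [0,1]. Then log det(Θ₀ + Δ) − log det(Θ₀) = tr(Θ₀⁻¹Δ) − vec(Δ)ᵀ (∫₀¹ (1−v) (Θ₀+vΔ)⁻¹ ⊗ (Θ₀+vΔ)⁻¹ dv) vec(Δ), where ⊗ is the Kronecker product and vec stacks matrix entries into a vector. -/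
open Matrix Kronecker Polynomial

section Aux

attribute [local instance] Matrix.linftyOpNormedAddCommGroup Matrix.linftyOpNormedRing
  Matrix.linftyOpNormedAlgebra

/-- trace as a continuous linear map, for the `linftyOp` norm. -/
noncomputable def stmt11trCLM (p : ℕ) : Matrix (Fin p) (Fin p) ℝ →L[ℝ] ℝ :=
  LinearMap.toContinuousLinearMap (Matrix.traceLinearMap (Fin p) ℝ ℝ)

lemma stmt11_trCLM_apply {p : ℕ} (A : Matrix (Fin p) (Fin p) ℝ) :
    stmt11trCLM p A = A.trace := rfl

/-- derivative of the determinant at `0`. -/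
lemma stmt11_det_deriv0 {p : ℕ} (A Δ : Matrix (Fin p) (Fin p) ℝ) (hA : IsUnit A.det) :
    HasDerivAt (fun t : ℝ => (A + t • Δ).det) (A.det * (A⁻¹ * Δ).trace) 0 := by
  set M := A⁻¹ * Δ with hM
  set P := (det (1 + (X : ℝ[X]) • M.map C)).divX.divX with hP
  have key : ∀ t : ℝ, (A + t • Δ).det = A.det * (1 + M.trace * t + P.eval t * t ^ 2) := by
    intro t
    have h1 : A + t • Δ = A * (1 + t • M) := by
      rw [Matrix.mul_add, Matrix.mul_one, Matrix.mul_smul, hM,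
        Matrix.mul_nonsing_inv_cancel_left _ _ hA]
    rw [h1, Matrix.det_mul, Matrix.det_one_add_smul, mul_comm M.trace t]
  have h2 : HasDerivAt (fun t : ℝ => 1 + M.trace * t + P.eval t * t ^ 2) M.trace 0 := by
    have := ((hasDerivAt_const (0:ℝ) 1).add ((hasDerivAt_id 0).const_mul M.trace)).add
      ((P.hasDerivAt 0).mul (hasDerivAt_pow 2 0))
    simp at this
    exact this
  have h3 := h2.const_mul A.det
  refine HasDerivAt.congr_deriv (h3.congr_of_eventuallyEq ?_) (by ring)
  filter_upwards with t using key t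

/-- derivative of the determinant at a general point. -/
lemma stmt11_det_deriv {p : ℕ} (Θ₀ Δ : Matrix (Fin p) (Fin p) ℝ) (v₀ : ℝ)
    (hA : IsUnit (Θ₀ + v₀ • Δ).det) :
    HasDerivAt (fun v : ℝ => (Θ₀ + v • Δ).det)
      ((Θ₀ + v₀ • Δ).det * ((Θ₀ + v₀ • Δ)⁻¹ * Δ).trace) v₀ := by
  have h0 : HasDerivAt (fun t : ℝ => ((Θ₀ + v₀ • Δ) + t • Δ).det)
      ((Θ₀ + v₀ • Δ).det * ((Θ₀ + v₀ • Δ)⁻¹ * Δ).trace) ((fun v : ℝ => v - v₀) v₀) := by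
    simpa using stmt11_det_deriv0 (Θ₀ + v₀ • Δ) Δ hA
  have hi : HasDerivAt (fun v : ℝ => v - v₀) 1 v₀ := (hasDerivAt_id v₀).sub_const v₀
  have hc := HasDerivAt.comp (h₂ := fun t : ℝ => ((Θ₀ + v₀ • Δ) + t • Δ).det)
    (h := fun v : ℝ => v - v₀) v₀ h0 hi
  have heq : ((fun t : ℝ => ((Θ₀ + v₀ • Δ) + t • Δ).det) ∘ fun v : ℝ => v - v₀)
      = fun v : ℝ => (Θ₀ + v • Δ).det := by
    funext v
    simp only [Function.comp_apply]
    congr 1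
    rw [sub_smul]
    abel
  rw [heq, mul_one] at hc
  exact hc

/-- derivative of the matrix inverse. -/
lemma stmt11_inv_deriv {p : ℕ} (Θ₀ Δ : Matrix (Fin p) (Fin p) ℝ) (v₀ : ℝ)
    (h : IsUnit (Θ₀ + v₀ • Δ)) :
    HasDerivAt (fun v : ℝ => (Θ₀ + v • Δ)⁻¹)
      (-((Θ₀ + v₀ • Δ)⁻¹ * Δ * (Θ₀ + v₀ • Δ)⁻¹)) v₀ := by
  have hS : HasDerivAt (fun v : ℝ => Θ₀ + v • Δ) Δ v₀ := by
    have := (hasDerivAt_const v₀ Θ₀).add ((hasDerivAt_id v₀).smul_const Δ)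
    simp at this
    exact this
  have hinv := (hasFDerivAt_ringInverse (𝕜 := ℝ) h.unit).comp_hasDerivAt v₀ hS
  simp only [ContinuousLinearMap.neg_apply, ContinuousLinearMap.mulLeftRight_apply] at hinv
  have hcoe : (↑h.unit⁻¹ : Matrix (Fin p) (Fin p) ℝ) = (Θ₀ + v₀ • Δ)⁻¹ := by
    rw [Matrix.coe_units_inv, h.unit_spec]
  simp only [hcoe, IsUnit.unit_spec, Function.comp_def,
    ← Matrix.nonsing_inv_eq_ringInverse] at hinv
  exact hinv

/-- derivative of `v ↦ tr((Θ₀+vΔ)⁻¹ Δ)`. -/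
lemma stmt11_trace_deriv {p : ℕ} (Θ₀ Δ : Matrix (Fin p) (Fin p) ℝ) (v₀ : ℝ)
    (h : IsUnit (Θ₀ + v₀ • Δ)) :
    HasDerivAt (fun v : ℝ => ((Θ₀ + v • Δ)⁻¹ * Δ).trace)
      (-(((Θ₀ + v₀ • Δ)⁻¹ * Δ * ((Θ₀ + v₀ • Δ)⁻¹ * Δ)).trace)) v₀ := by
  have h1 := (stmt11trCLM p).hasFDerivAt.comp_hasDerivAt v₀
    ((stmt11_inv_deriv Θ₀ Δ v₀ h).mul_const Δ)
  change HasDerivAt _ ((-((Θ₀ + v₀ • Δ)⁻¹ * Δ * (Θ₀ + v₀ • Δ)⁻¹) * Δ).trace) v₀ at h1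
  simpa [stmt11trCLM, Function.comp_def, mul_assoc] using h1

/-- continuity of `v ↦ tr(((Θ₀+vΔ)⁻¹ Δ)²)`. -/
lemma stmt11_q_contAt {p : ℕ} (Θ₀ Δ : Matrix (Fin p) (Fin p) ℝ) (v₀ : ℝ)
    (h : IsUnit (Θ₀ + v₀ • Δ)) :
    ContinuousAt (fun v : ℝ => ((Θ₀ + v • Δ)⁻¹ * Δ * ((Θ₀ + v • Δ)⁻¹ * Δ)).trace) v₀ := by
  have hc : ContinuousAt (fun v : ℝ => (Θ₀ + v • Δ)⁻¹) v₀ :=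
    (stmt11_inv_deriv Θ₀ Δ v₀ h).continuousAt
  have : ContinuousAt (fun v : ℝ => (Θ₀ + v • Δ)⁻¹ * Δ * ((Θ₀ + v • Δ)⁻¹ * Δ)) v₀ :=
    (hc.mul continuousAt_const).mul (hc.mul continuousAt_const)
  exact ((stmt11trCLM p).continuous.continuousAt).comp this

end Aux

/-- quadratic form via Kronecker product equals a trace. -/
lemma stmt11_kron_trace {p : ℕ} (M N : Matrix (Fin p) (Fin p) ℝ) (hM : Mᵀ = M) (hN : Nᵀ = N) :
    (fun ij : Fin p × Fin p => N ij.1 ij.2) ⬝ᵥ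
      ((M ⊗ₖ M).mulVec (fun ij : Fin p × Fin p => N ij.1 ij.2))
    = (M * N * M * N).trace := by
  have hM' : ∀ i j, M i j = M j i := fun i j => Matrix.IsSymm.apply hM j i
  have hN' : ∀ i j, N i j = N j i := fun i j => Matrix.IsSymm.apply hN j i
  simp only [dotProduct, Matrix.mulVec, dotProduct, kroneckerMap_apply,
    Matrix.trace, Matrix.diag, Matrix.mul_apply, Fintype.sum_prod_type]
  simp only [Finset.sum_mul, Finset.mul_sum]
  rw [Finset.sum_comm]
  refine Finset.sum_congr rfl fun i _ => ?_
  rw [Finset.sum_comm]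
  rw [Finset.sum_comm]
  refine Finset.sum_congr rfl fun x _ => Finset.sum_congr rfl fun y _ =>
    Finset.sum_congr rfl fun l _ => ?_
  rw [hM' x y, hN' y l]
  ring

/-- Taylor expansion with integral remainder for the log-determinant: if `Θ₀ + vΔ ≻ 0` for
all `v` in an open interval containing `[0,1]`, then
`log det(Θ₀+Δ) − log det Θ₀ = tr(Θ₀⁻¹Δ) − ∫₀¹ (1−v)·vec(Δ)ᵀ((Θ₀+vΔ)⁻¹⊗(Θ₀+vΔ)⁻¹)vec(Δ) dv`. -/
theorem stmt11 {p : ℕ} (Θ₀ Δ : Matrix (Fin p) (Fin p) ℝ)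
    (h0 : Θ₀.PosDef) (hΔ : Δ.IsHermitian)
    (a b : ℝ) (ha : a < 0) (hb : 1 < b)
    (hpd : ∀ v ∈ Set.Ioo a b, (Θ₀ + v • Δ).PosDef) :
    Real.log (Θ₀ + Δ).det - Real.log Θ₀.det
      = (Θ₀⁻¹ * Δ).trace -
        ∫ v in (0 : ℝ)..1, (1 - v) *
          ((fun ij : Fin p × Fin p => Δ ij.1 ij.2) ⬝ᵥ
            (((Θ₀ + v • Δ)⁻¹ ⊗ₖ (Θ₀ + v • Δ)⁻¹).mulVec
              (fun ij : Fin p × Fin p => Δ ij.1 ij.2))) := by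
  have huIcc : Set.uIcc (0:ℝ) 1 ⊆ Set.Ioo a b := by
    rw [Set.uIcc_of_le zero_le_one]
    exact fun x hx => ⟨lt_of_lt_of_le ha hx.1, lt_of_le_of_lt hx.2 hb⟩
  set g : ℝ → ℝ := fun v => ((Θ₀ + v • Δ)⁻¹ * Δ).trace with hg_def
  set q : ℝ → ℝ := fun v => ((Θ₀ + v • Δ)⁻¹ * Δ * ((Θ₀ + v • Δ)⁻¹ * Δ)).trace with hq_def
  have hpd' : ∀ v ∈ Set.uIcc (0:ℝ) 1, (Θ₀ + v • Δ).PosDef := fun v hv => hpd v (huIcc hv)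
  have hdet_pos : ∀ v ∈ Set.uIcc (0:ℝ) 1, 0 < (Θ₀ + v • Δ).det :=
    fun v hv => (hpd' v hv).det_pos
  have hunit : ∀ v ∈ Set.uIcc (0:ℝ) 1, IsUnit (Θ₀ + v • Δ) := fun v hv =>
    (Matrix.isUnit_iff_isUnit_det _).mpr (hdet_pos v hv).ne'.isUnit
  -- derivative of f = log det
  have hf : ∀ v ∈ Set.uIcc (0:ℝ) 1,
      HasDerivAt (fun v : ℝ => Real.log (Θ₀ + v • Δ).det) (g v) v := by
    intro v hv
    have hd := stmt11_det_deriv Θ₀ Δ v (hdet_pos v hv).ne'.isUnit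
    have := hd.log (hdet_pos v hv).ne'
    simpa [hg_def, mul_comm, mul_div_assoc, div_self (hdet_pos v hv).ne',
      mul_div_cancel₀ _ (hdet_pos v hv).ne'] using this
  -- derivative of g
  have hg : ∀ v ∈ Set.uIcc (0:ℝ) 1, HasDerivAt g (-(q v)) v := fun v hv =>
    stmt11_trace_deriv Θ₀ Δ v (hunit v hv)
  -- integrability
  have hg_cont : ContinuousOn g (Set.uIcc (0:ℝ) 1) := fun v hv =>
    (hg v hv).continuousAt.continuousWithinAt
  have hg_int : IntervalIntegrable g MeasureTheory.volume 0 1 := hg_cont.intervalIntegrable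
  have hq_cont : ContinuousOn q (Set.uIcc (0:ℝ) 1) := fun v hv =>
    (stmt11_q_contAt Θ₀ Δ v (hunit v hv)).continuousWithinAt
  have hq_int : IntervalIntegrable (fun v => -(q v)) MeasureTheory.volume 0 1 :=
    (hq_cont.neg).intervalIntegrable
  -- FTC
  have hFTC : ∫ v in (0:ℝ)..1, g v
      = Real.log (Θ₀ + (1:ℝ) • Δ).det - Real.log (Θ₀ + (0:ℝ) • Δ).det :=
    intervalIntegral.integral_eq_sub_of_hasDerivAt (fun v hv => hf v hv) hg_int
  -- integration by parts
  have hIBP := intervalIntegral.integral_mul_deriv_eq_deriv_mul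
    (u := g) (u' := fun v => -(q v)) (v := fun x : ℝ => x - 1) (v' := fun _ => (1:ℝ))
    (fun x hx => hg x hx) (fun x _ => (hasDerivAt_id x).sub_const 1)
    hq_int intervalIntegrable_const
  simp only [mul_one, sub_self, mul_zero, zero_sub] at hIBP
  -- hIBP : ∫ g = g 1 * 0 - g 0 * (0-1) - ∫ (-(q x)) * (x-1)
  -- rewrite the target integral
  have hint_eq : (∫ v in (0:ℝ)..1, (1 - v) *
          ((fun ij : Fin p × Fin p => Δ ij.1 ij.2) ⬝ᵥ
            (((Θ₀ + v • Δ)⁻¹ ⊗ₖ (Θ₀ + v • Δ)⁻¹).mulVec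
              (fun ij : Fin p × Fin p => Δ ij.1 ij.2))))
      = ∫ v in (0:ℝ)..1, -(q v) * (v - 1) := by
    refine intervalIntegral.integral_congr fun v hv => ?_
    have hherm : ((Θ₀ + v • Δ)⁻¹)ᵀ = (Θ₀ + v • Δ)⁻¹ := by
      have h1 : ((Θ₀ + v • Δ)⁻¹).IsHermitian := ((hpd' v hv).1).inv
      simpa [Matrix.conjTranspose_eq_transpose_of_trivial] using h1.eq
    have hΔt : Δᵀ = Δ := by simpa [Matrix.conjTranspose_eq_transpose_of_trivial] using hΔ.eq
    rw [stmt11_kron_trace _ _ hherm hΔt]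
    have : ((Θ₀ + v • Δ)⁻¹ * Δ * (Θ₀ + v • Δ)⁻¹ * Δ).trace = q v := by
      simp [hq_def, mul_assoc]
    rw [this]; ring
  have h00 : Θ₀ + (0:ℝ) • Δ = Θ₀ := by simp
  have h11 : Θ₀ + (1:ℝ) • Δ = Θ₀ + Δ := by simp
  have hg0 : g 0 = (Θ₀⁻¹ * Δ).trace := by simp [hg_def]
  rw [h00, h11] at hFTC
  rw [hint_eq, ← hFTC, hIBP, hg0]
  ring
end

section
/- Let Θ₀ be symmetric positive definite and Δ symmetric with Θ₀ + vΔ ≻ 0 for v ∈ [0,1]. Then vec(Δ)ᵀ (∫₀¹ (1−v)(Θ₀+vΔ)⁻¹⊗(Θ₀+vΔ)⁻¹ dv) vec(Δ) ≥ ‖Δ‖_F² / (2 (λ_max(Θ₀) + ‖Δ‖₂)²). -/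
open Matrix Kronecker

set_option linter.unusedSectionVars false


variable {n : Type*} [Fintype n] [DecidableEq n]

/-- Rayleigh upper bound from eigenvalue bound. -/
lemma smul_one_sub_psd {A : Matrix n n ℝ} (hA : A.IsHermitian) {c : ℝ}
    (hc : ∀ i, hA.eigenvalues i ≤ c) : (c • (1 : Matrix n n ℝ) - A).PosSemidef := by
  have key : c • (1 : Matrix n n ℝ) - A =
      (hA.eigenvectorUnitary : Matrix n n ℝ) *
        diagonal (fun i => c - hA.eigenvalues i) *
        star (hA.eigenvectorUnitary : Matrix n n ℝ) := by
    have hU : (hA.eigenvectorUnitary : Matrix n n ℝ) *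
        star (hA.eigenvectorUnitary : Matrix n n ℝ) = 1 :=
      Matrix.mem_unitaryGroup_iff.mp hA.eigenvectorUnitary.2
    have hd : diagonal (fun i => c - hA.eigenvalues i) =
        c • (1 : Matrix n n ℝ) - diagonal (RCLike.ofReal ∘ hA.eigenvalues) := by
      ext i j
      by_cases h : i = j <;> simp [h, diagonal, Matrix.one_apply, Matrix.smul_apply]
    have hs := hA.spectral_theorem
    simp only [Unitary.conjStarAlgAut_apply] at hs
    rw [hd, Matrix.mul_sub, Matrix.sub_mul, Matrix.mul_smul, Matrix.mul_one, Matrix.smul_mul, hU, ← hs]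
  rw [key]
  exact (posSemidef_diagonal_iff.mpr fun i => sub_nonneg.mpr (hc i)).mul_mul_conjTranspose_same _

lemma quad_le_of_eigen_le {A : Matrix n n ℝ} (hA : A.IsHermitian) {c : ℝ}
    (hc : ∀ i, hA.eigenvalues i ≤ c) (x : n → ℝ) :
    x ⬝ᵥ A.mulVec x ≤ c * (x ⬝ᵥ x) := by
  have h := (smul_one_sub_psd hA hc).dotProduct_mulVec_nonneg x
  simp only [star_trivial, Matrix.sub_mulVec, Matrix.smul_mulVec, Matrix.one_mulVec,
    dotProduct_sub, dotProduct_smul, smul_eq_mul] at h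
  linarith

variable {m : Type*} [Fintype m] [DecidableEq m]

lemma kron_conjTranspose (A : Matrix n n ℝ) (B : Matrix m m ℝ) :
    (A ⊗ₖ B)ᴴ = Aᴴ ⊗ₖ Bᴴ := by
  ext ⟨i, j⟩ ⟨k, l⟩
  simp [Matrix.conjTranspose_apply, Matrix.kroneckerMap_apply]

lemma kron_isHermitian {A : Matrix n n ℝ} {B : Matrix m m ℝ}
    (hA : A.IsHermitian) (hB : B.IsHermitian) : (A ⊗ₖ B).IsHermitian := by
  rw [Matrix.IsHermitian, kron_conjTranspose, hA.eq, hB.eq]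

open scoped MatrixOrder in
lemma kron_posSemidef {A : Matrix n n ℝ} {B : Matrix m m ℝ}
    (hA : A.PosSemidef) (hB : B.PosSemidef) : (A ⊗ₖ B).PosSemidef := by
  have hS : A ⊗ₖ B = (CFC.sqrt A ⊗ₖ CFC.sqrt B)ᴴ * (CFC.sqrt A ⊗ₖ CFC.sqrt B) := by
    rw [kron_conjTranspose, (CFC.sqrt_nonneg A).posSemidef.1.eq, (CFC.sqrt_nonneg B).posSemidef.1.eq,
      ← Matrix.mul_kronecker_mul, CFC.sqrt_mul_sqrt_self A hA.nonneg, CFC.sqrt_mul_sqrt_self B hB.nonneg]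
  rw [hS]
  exact Matrix.posSemidef_conjTranspose_mul_self _

lemma psd_smul_one {c : ℝ} (hc : 0 ≤ c) : ((c • (1 : Matrix n n ℝ))).PosSemidef := by
  rw [Matrix.smul_one_eq_diagonal]
  exact Matrix.PosSemidef.diagonal fun _ => hc

lemma kron_sq_bound {A : Matrix n n ℝ} {M : ℝ} (hA : A.PosSemidef) (hM : 0 ≤ M)
    (h : (M • (1 : Matrix n n ℝ) - A).PosSemidef) :
    ((M ^ 2) • (1 : Matrix (n × n) (n × n) ℝ) - A ⊗ₖ A).PosSemidef := by
  have key : (M ^ 2) • (1 : Matrix (n × n) (n × n) ℝ) - A ⊗ₖ A =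
      (M • (1 : Matrix n n ℝ) - A) ⊗ₖ (M • (1 : Matrix n n ℝ)) +
        A ⊗ₖ (M • (1 : Matrix n n ℝ) - A) := by
    ext ⟨i, j⟩ ⟨k, l⟩
    simp only [Matrix.sub_apply, Matrix.add_apply, Matrix.smul_apply, Matrix.kroneckerMap_apply,
      Matrix.one_apply, Prod.mk.injEq, smul_eq_mul]
    by_cases h1 : i = k <;> by_cases h2 : j = l <;> simp [h1, h2] <;> ring
  rw [key]
  exact (kron_posSemidef h (psd_smul_one hM)).add (kron_posSemidef hA h)

lemma psd_smul {A : Matrix n n ℝ} (hA : A.PosSemidef) {c : ℝ} (hc : 0 ≤ c) :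
    (c • A).PosSemidef := by
  refine Matrix.PosSemidef.of_dotProduct_mulVec_nonneg (by rw [Matrix.IsHermitian, Matrix.conjTranspose_smul, hA.1.eq, star_trivial]) fun x => ?_
  rw [Matrix.smul_mulVec, dotProduct_smul, smul_eq_mul]
  exact mul_nonneg hc (hA.dotProduct_mulVec_nonneg x)

open scoped MatrixOrder in
lemma inv_lower_bound {B : Matrix n n ℝ} (hB : B.PosDef) {m : ℝ} (hm : 0 < m)
    (h : (m • (1 : Matrix n n ℝ) - B).PosSemidef) :
    (B⁻¹ - m⁻¹ • (1 : Matrix n n ℝ)).PosSemidef := by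
  have hBinv : B⁻¹.PosDef := hB.inv
  set S := CFC.sqrt B⁻¹ with hSdef
  have hSpsd : S.PosSemidef := (CFC.sqrt_nonneg B⁻¹).posSemidef
  have hSS : S * S = B⁻¹ := CFC.sqrt_mul_sqrt_self B⁻¹ hBinv.posSemidef.nonneg
  have hdetB : B.det ≠ 0 := hB.det_pos.ne'
  have hdetS : S.det ≠ 0 := by
    intro hzero
    have : (S * S).det = 0 := by rw [Matrix.det_mul, hzero, mul_zero]
    rw [hSS, Matrix.det_nonsing_inv] at this
    exact hdetB (by simpa using this)
  have hSBS : S * B * S = 1 := by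
    have hBeq : B = (S * S)⁻¹ := by rw [hSS, Matrix.nonsing_inv_nonsing_inv _ hdetB.isUnit]
    rw [hBeq, Matrix.mul_inv_rev, ← Matrix.mul_assoc, Matrix.mul_assoc (S * S⁻¹),
      Matrix.mul_nonsing_inv _ hdetS.isUnit, Matrix.nonsing_inv_mul _ hdetS.isUnit, Matrix.mul_one]
  have key : B⁻¹ - m⁻¹ • (1 : Matrix n n ℝ) =
      m⁻¹ • (S * (m • (1 : Matrix n n ℝ) - B) * S) := by
    rw [Matrix.mul_sub, Matrix.sub_mul, Matrix.mul_smul, Matrix.mul_one, Matrix.smul_mul, hSS,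
      hSBS, smul_sub, smul_smul, inv_mul_cancel₀ hm.ne', one_smul]
  rw [key]
  have := (h.mul_mul_conjTranspose_same S)
  rw [hSpsd.1.eq] at this
  have h2 : (S * (m • (1 : Matrix n n ℝ) - B) * S).PosSemidef := this
  exact psd_smul h2 (inv_nonneg.mpr hm.le)

lemma posDef_of_psd_det_ne_zero {A : Matrix n n ℝ} (hA : A.PosSemidef) (hd : A.det ≠ 0) :
    A.PosDef := by
  refine Matrix.PosDef.of_dotProduct_mulVec_pos hA.1 fun x hx => ?_
  rcases lt_or_eq_of_le (hA.dotProduct_mulVec_nonneg x) with h | h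
  · exact h
  · exfalso
    have h0 : A *ᵥ x = 0 := (hA.dotProduct_mulVec_zero_iff x).mp h.symm
    exact hd (Matrix.exists_mulVec_eq_zero_iff.mp ⟨x, hx, h0⟩)

lemma main_pointwise {A : Matrix n n ℝ} (hA : A.PosDef) {M : ℝ} (hM : 0 < M)
    (hbound : (M • (1 : Matrix n n ℝ) - A).PosSemidef) (x : n × n → ℝ) :
    (x ⬝ᵥ x) / M ^ 2 ≤ x ⬝ᵥ ((A⁻¹ ⊗ₖ A⁻¹).mulVec x) := by
  have hAA : (A ⊗ₖ A).PosDef := by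
    refine posDef_of_psd_det_ne_zero (kron_posSemidef hA.posSemidef hA.posSemidef) ?_
    rw [Matrix.det_kronecker]
    exact (mul_pos (pow_pos hA.det_pos _) (pow_pos hA.det_pos _)).ne'
  have hb2 := kron_sq_bound hA.posSemidef hM.le hbound
  have hfin := inv_lower_bound hAA (pow_pos hM 2) hb2
  rw [Matrix.inv_kronecker] at hfin
  have h2 := hfin.dotProduct_mulVec_nonneg x
  simp only [star_trivial, Matrix.sub_mulVec, Matrix.smul_mulVec, Matrix.one_mulVec,
    dotProduct_sub, dotProduct_smul, smul_eq_mul] at h2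
  rw [div_eq_inv_mul]
  linarith


/-- The Frobenius norm of a real square matrix. -/
noncomputable def frob {p : ℕ} (A : Matrix (Fin p) (Fin p) ℝ) : ℝ :=
  Real.sqrt (∑ i, ∑ j, (A i j) ^ 2)

/-- If `Θ₀ + vΔ ≻ 0` on `[0,1]`, then
`vec(Δ)ᵀ(∫₀¹(1−v)(Θ₀+vΔ)⁻¹⊗(Θ₀+vΔ)⁻¹ dv)vec(Δ) ≥ ‖Δ‖_F²/(2(λ_max(Θ₀)+‖Δ‖₂)²)`,
with `‖Δ‖₂` the largest absolute eigenvalue of the symmetric matrix `Δ`. -/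
theorem stmt12 {p : ℕ} [NeZero p] (Θ₀ Δ : Matrix (Fin p) (Fin p) ℝ)
    (h0 : Θ₀.PosDef) (hΔ : Δ.IsHermitian)
    (hpd : ∀ v ∈ Set.Icc (0 : ℝ) 1, (Θ₀ + v • Δ).PosDef) :
    frob Δ ^ 2 /
        (2 * ((⨆ i, h0.isHermitian.eigenvalues i) + (⨆ i, |hΔ.eigenvalues i|)) ^ 2)
      ≤ ∫ v in (0 : ℝ)..1, (1 - v) *
          ((fun ij : Fin p × Fin p => Δ ij.1 ij.2) ⬝ᵥ
            (((Θ₀ + v • Δ)⁻¹ ⊗ₖ (Θ₀ + v • Δ)⁻¹).mulVec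
              (fun ij : Fin p × Fin p => Δ ij.1 ij.2))) := by
  have hp : Nonempty (Fin p) := Fin.pos_iff_nonempty.mp (Nat.pos_of_ne_zero (NeZero.ne p))
  set x : Fin p × Fin p → ℝ := fun ij => Δ ij.1 ij.2 with hxdef
  set lam : ℝ := ⨆ i, h0.isHermitian.eigenvalues i with hlamdef
  set s : ℝ := ⨆ i, |hΔ.eigenvalues i| with hsdef
  set M : ℝ := lam + s with hMdef
  have hbdd0 : BddAbove (Set.range h0.isHermitian.eigenvalues) :=
    Set.Finite.bddAbove (Set.finite_range _)
  have hbddΔ : BddAbove (Set.range fun i => |hΔ.eigenvalues i|) :=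
    Set.Finite.bddAbove (Set.finite_range _)
  have hlam_pos : 0 < lam := by
    obtain ⟨i⟩ := hp
    exact lt_of_lt_of_le (h0.eigenvalues_pos i) (le_ciSup hbdd0 i)
  have hs_nonneg : 0 ≤ s := by
    obtain ⟨i⟩ := hp
    exact le_trans (abs_nonneg _) (le_ciSup hbddΔ i)
  have hM_pos : 0 < M := by positivity
  -- quadratic form bounds
  have hq0 : ∀ y : Fin p → ℝ, y ⬝ᵥ Θ₀.mulVec y ≤ lam * (y ⬝ᵥ y) :=
    quad_le_of_eigen_le h0.isHermitian (fun i => le_ciSup hbdd0 i)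
  have hqΔ : ∀ y : Fin p → ℝ, y ⬝ᵥ Δ.mulVec y ≤ s * (y ⬝ᵥ y) :=
    quad_le_of_eigen_le hΔ (fun i => (le_abs_self _).trans (le_ciSup hbddΔ i))
  -- PSD bound on M•1 - (Θ₀ + v•Δ) for v ∈ [0,1]
  have hbound : ∀ v ∈ Set.Icc (0:ℝ) 1,
      (M • (1 : Matrix (Fin p) (Fin p) ℝ) - (Θ₀ + v • Δ)).PosSemidef := by
    intro v hv
    refine Matrix.PosSemidef.of_dotProduct_mulVec_nonneg ?_ fun y => ?_
    · rw [Matrix.IsHermitian, Matrix.conjTranspose_sub, Matrix.conjTranspose_smul,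
        Matrix.conjTranspose_one, (hpd v hv).1.eq, star_trivial]
    · simp only [star_trivial, Matrix.sub_mulVec, Matrix.smul_mulVec,
        Matrix.one_mulVec, dotProduct_sub, dotProduct_smul, smul_eq_mul,
        Matrix.add_mulVec, dotProduct_add]
      have h1 := hq0 y
      have h2 := hqΔ y
      have hyy : 0 ≤ y ⬝ᵥ y := Finset.sum_nonneg fun i _ => mul_self_nonneg _
      have hv0 : 0 ≤ v := hv.1
      have hv1 : v ≤ 1 := hv.2
      have h3 : v * (y ⬝ᵥ Δ.mulVec y) ≤ s * (y ⬝ᵥ y) := by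
        calc v * (y ⬝ᵥ Δ.mulVec y) ≤ v * (s * (y ⬝ᵥ y)) :=
              mul_le_mul_of_nonneg_left h2 hv0
          _ ≤ 1 * (s * (y ⬝ᵥ y)) := by
              apply mul_le_mul_of_nonneg_right hv1 (by positivity)
          _ = s * (y ⬝ᵥ y) := one_mul _
      rw [hMdef]
      nlinarith [h1, h3]
  -- pointwise lower bound
  have hpt : ∀ v ∈ Set.Icc (0:ℝ) 1,
      (x ⬝ᵥ x) / M ^ 2 ≤ x ⬝ᵥ (((Θ₀ + v • Δ)⁻¹ ⊗ₖ (Θ₀ + v • Δ)⁻¹).mulVec x) :=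
    fun v hv => main_pointwise (hpd v hv) hM_pos (hbound v hv) x
  -- continuity of the integrand
  have hAcont : Continuous (fun v : ℝ => Θ₀ + v • Δ) :=
    continuous_const.add (continuous_id.smul continuous_const)
  have hC : ∀ i j : Fin p, ContinuousOn (fun v : ℝ => (Θ₀ + v • Δ)⁻¹ i j) (Set.Icc 0 1) := by
    intro i j
    have hdet : Continuous fun v : ℝ => (Θ₀ + v • Δ).det := hAcont.matrix_det
    have hadj : Continuous fun v : ℝ => (Θ₀ + v • Δ).adjugate i j :=
      hAcont.matrix_adjugate.matrix_elem i j
    have heq : ∀ v : ℝ, (Θ₀ + v • Δ)⁻¹ i j =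
        ((Θ₀ + v • Δ).det)⁻¹ * (Θ₀ + v • Δ).adjugate i j := by
      intro v
      rw [Matrix.inv_def, Ring.inverse_eq_inv', Matrix.smul_apply, smul_eq_mul]
    simp only [heq]
    exact (hdet.continuousOn.inv₀ fun v hv => (hpd v hv).det_pos.ne').mul hadj.continuousOn
  have hg : ContinuousOn (fun v : ℝ =>
      (1 - v) * (x ⬝ᵥ (((Θ₀ + v • Δ)⁻¹ ⊗ₖ (Θ₀ + v • Δ)⁻¹).mulVec x))) (Set.Icc 0 1) := by
    refine ContinuousOn.mul ((continuous_const.sub continuous_id).continuousOn) ?_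
    simp only [dotProduct, Matrix.mulVec, Matrix.kroneckerMap_apply]
    exact continuousOn_finset_sum _ fun i _ => continuousOn_const.mul
      (continuousOn_finset_sum _ fun j _ =>
        ((hC i.1 j.1).mul (hC i.2 j.2)).mul continuousOn_const)
  have hgint : IntervalIntegrable (fun v : ℝ =>
      (1 - v) * (x ⬝ᵥ (((Θ₀ + v • Δ)⁻¹ ⊗ₖ (Θ₀ + v • Δ)⁻¹).mulVec x)))
      MeasureTheory.volume 0 1 := by
    apply ContinuousOn.intervalIntegrable
    rwa [Set.uIcc_of_le zero_le_one]
  set c : ℝ := (x ⬝ᵥ x) / M ^ 2 with hcdef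
  have hfint : IntervalIntegrable (fun v : ℝ => c * (1 - v)) MeasureTheory.volume 0 1 :=
    (continuous_const.mul (continuous_const.sub continuous_id)).intervalIntegrable 0 1
  have hmono : (∫ v in (0:ℝ)..1, c * (1 - v)) ≤
      ∫ v in (0:ℝ)..1, (1 - v) * (x ⬝ᵥ (((Θ₀ + v • Δ)⁻¹ ⊗ₖ (Θ₀ + v • Δ)⁻¹).mulVec x)) := by
    refine intervalIntegral.integral_mono_on zero_le_one hfint hgint fun v hv => ?_
    rw [mul_comm]
    exact mul_le_mul_of_nonneg_left (hpt v hv) (by linarith [hv.2])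
  have hval : (∫ v in (0:ℝ)..1, c * (1 - v)) = c / 2 := by
    rw [intervalIntegral.integral_const_mul]
    have h12 : (∫ v in (0:ℝ)..1, (1 - v)) = 1 / 2 := by
      rw [intervalIntegral.integral_sub (intervalIntegrable_const (c := (1:ℝ)))
        intervalIntegral.intervalIntegrable_id, intervalIntegral.integral_const, integral_id]
      norm_num
    rw [h12]
    ring
  have hfrob : frob Δ ^ 2 = x ⬝ᵥ x := by
    rw [frob, Real.sq_sqrt (by positivity), dotProduct, Fintype.sum_prod_type]
    simp [hxdef, pow_two]
  have hlhs : frob Δ ^ 2 / (2 * M ^ 2) = c / 2 := by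
    rw [hfrob, hcdef, div_div, mul_comm (M ^ 2) 2]
  rw [hlhs, ← hval]
  exact hmono
end

section
/- Let Θ₀ be symmetric positive definite with λ_min(Θ₀) ≥ c > 0 and Δ₀ symmetric with ‖Δ₀‖₂ ≤ c/32 and Θ₀ + Δ₀ ≻ 0. Then 0 ≤ tr(Δ₀ Θ₀⁻¹) − (log det(Θ₀+Δ₀) − log det Θ₀) ≤ ‖Δ₀‖_F² / (2(31c/32)²). -/
open Matrix
open scoped MatrixOrder

section Helpers
variable {p : ℕ}

theorem st13_hxz_aux (U : Matrix.unitaryGroup (Fin p) ℝ) (x : Fin p → ℝ) :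
    x ᵥ* (U : Matrix (Fin p) (Fin p) ℝ) = star (U : Matrix (Fin p) (Fin p) ℝ) *ᵥ x := by
  have hVt : (U : Matrix (Fin p) (Fin p) ℝ)ᵀ = star (U : Matrix (Fin p) (Fin p) ℝ) := by
    rw [Matrix.star_eq_conjTranspose]
    ext i j; simp [conjTranspose_apply]
  rw [← hVt, ← vecMul_transpose, transpose_transpose]

theorem st13_quad_conj (U : Matrix.unitaryGroup (Fin p) ℝ) (d : Fin p → ℝ) (x : Fin p → ℝ) :
    x ⬝ᵥ ((U : Matrix (Fin p) (Fin p) ℝ) * diagonal d * star (U : Matrix (Fin p) (Fin p) ℝ)) *ᵥ x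
      = ∑ i, d i * ((star (U : Matrix (Fin p) (Fin p) ℝ) *ᵥ x) i)^2 := by
  set V := (U : Matrix (Fin p) (Fin p) ℝ)
  set z := star V *ᵥ x with hz
  rw [← mulVec_mulVec, ← mulVec_mulVec, dotProduct_mulVec, st13_hxz_aux, ← hz, dotProduct]
  exact Finset.sum_congr rfl fun i _ => by rw [mulVec_diagonal]; ring

theorem st13_norm_conj (U : Matrix.unitaryGroup (Fin p) ℝ) (x : Fin p → ℝ) :
    ∑ i, ((star (U : Matrix (Fin p) (Fin p) ℝ) *ᵥ x) i)^2 = x ⬝ᵥ x := by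
  set V := (U : Matrix (Fin p) (Fin p) ℝ)
  set z := star V *ᵥ x with hz
  have h1 : z ⬝ᵥ z = x ⬝ᵥ x := by
    nth_rewrite 1 [hz]
    rw [← st13_hxz_aux, ← dotProduct_mulVec, hz, mulVec_mulVec,
      (Matrix.mem_unitaryGroup_iff).mp U.2, one_mulVec]
  rw [← h1, dotProduct]
  exact Finset.sum_congr rfl fun i _ => (sq (z i))

theorem st13_quad_le {A : Matrix (Fin p) (Fin p) ℝ} (hA : A.IsHermitian) {b : ℝ}
    (h : ∀ i, hA.eigenvalues i ≤ b) (x : Fin p → ℝ) :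
    x ⬝ᵥ A *ᵥ x ≤ b * (x ⬝ᵥ x) := by
  nth_rewrite 1 [hA.spectral_theorem]
  have : RCLike.ofReal ∘ hA.eigenvalues = hA.eigenvalues := by
    ext i; simp
  rw [Unitary.conjStarAlgAut_apply, this, st13_quad_conj, ← st13_norm_conj hA.eigenvectorUnitary x, Finset.mul_sum]
  exact Finset.sum_le_sum fun i _ => mul_le_mul_of_nonneg_right (h i) (sq_nonneg _)

theorem st13_le_quad {A : Matrix (Fin p) (Fin p) ℝ} (hA : A.IsHermitian) {a : ℝ}
    (h : ∀ i, a ≤ hA.eigenvalues i) (x : Fin p → ℝ) :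
    a * (x ⬝ᵥ x) ≤ x ⬝ᵥ A *ᵥ x := by
  nth_rewrite 1 [hA.spectral_theorem]
  have : RCLike.ofReal ∘ hA.eigenvalues = hA.eigenvalues := by
    ext i; simp
  rw [Unitary.conjStarAlgAut_apply, this, st13_quad_conj, ← st13_norm_conj hA.eigenvectorUnitary x, Finset.mul_sum]
  exact Finset.sum_le_sum fun i _ => mul_le_mul_of_nonneg_right (h i) (sq_nonneg _)

theorem st13_trace_psd_mul_nonneg {A B : Matrix (Fin p) (Fin p) ℝ}
    (hA : A.PosSemidef) (hB : B.PosSemidef) : 0 ≤ (A * B).trace := by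
  classical
  have h1 : A * B = (CFC.sqrt A) * ((CFC.sqrt A) * B) := by
    rw [← mul_assoc, CFC.sqrt_mul_sqrt_self A hA.nonneg]
  rw [h1, trace_mul_comm, mul_assoc]
  have h2 : ((CFC.sqrt A) * B * (CFC.sqrt A)).PosSemidef := by
    have := hB.mul_mul_conjTranspose_same (CFC.sqrt A)
    rwa [(CFC.sqrt_nonneg A).posSemidef.1.eq] at this
  calc (0:ℝ) ≤ ∑ i, ((CFC.sqrt A) * B * (CFC.sqrt A)) i i := by
        refine Finset.sum_nonneg fun i _ => ?_
        have := h2.dotProduct_mulVec_nonneg (Pi.single i 1)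
        simpa [dotProduct, mulVec, Pi.single_apply] using this
    _ = ((CFC.sqrt A) * (B * (CFC.sqrt A))).trace := by rw [← mul_assoc]; rfl

theorem st13_trace_mul_le {C X : Matrix (Fin p) (Fin p) ℝ} (hC : C.IsHermitian) {b : ℝ}
    (hq : ∀ x, x ⬝ᵥ C *ᵥ x ≤ b * (x ⬝ᵥ x)) (hX : X.PosSemidef) :
    (C * X).trace ≤ b * X.trace := by
  have hpsd : (b • (1 : Matrix (Fin p) (Fin p) ℝ) - C).PosSemidef := by
    refine .of_dotProduct_mulVec_nonneg ?_ ?_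
    · unfold Matrix.IsHermitian
      rw [conjTranspose_sub, conjTranspose_smul, conjTranspose_one, hC.eq]
      simp
    · intro x
      have := hq x
      simp only [sub_mulVec, dotProduct_sub, smul_mulVec, one_mulVec, dotProduct_smul]
      simp only [star_trivial]
      simp only [smul_eq_mul]
      linarith [hq x]
  have h0 : 0 ≤ ((b • (1 : Matrix (Fin p) (Fin p) ℝ) - C) * X).trace :=
    st13_trace_psd_mul_nonneg hpsd hX
  rw [sub_mul, trace_sub, smul_mul_assoc, one_mul, trace_smul, smul_eq_mul] at h0
  linarith

theorem st13_conj_mul_conj (U : Matrix.unitaryGroup (Fin p) ℝ) (d e : Fin p → ℝ) :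
    ((U : Matrix (Fin p) (Fin p) ℝ) * diagonal d * star (U : Matrix (Fin p) (Fin p) ℝ)) *
      ((U : Matrix (Fin p) (Fin p) ℝ) * diagonal e * star (U : Matrix (Fin p) (Fin p) ℝ))
    = (U : Matrix (Fin p) (Fin p) ℝ) * diagonal (d * e) * star (U : Matrix (Fin p) (Fin p) ℝ) := by
  set V := (U : Matrix (Fin p) (Fin p) ℝ)
  have h1 : star V * V = 1 := by
    exact (Matrix.mem_unitaryGroup_iff').mp U.2
  simp only [mul_assoc]
  rw [← mul_assoc (star V) V, h1, one_mul, ← mul_assoc (diagonal d), diagonal_mul_diagonal]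
  rfl

theorem st13_trace_conj (U : Matrix.unitaryGroup (Fin p) ℝ) (d : Fin p → ℝ) :
    ((U : Matrix (Fin p) (Fin p) ℝ) * diagonal d * star (U : Matrix (Fin p) (Fin p) ℝ)).trace
      = ∑ i, d i := by
  set V := (U : Matrix (Fin p) (Fin p) ℝ)
  have h1 : star V * V = 1 := by
    exact (Matrix.mem_unitaryGroup_iff').mp U.2
  rw [trace_mul_cycle, h1, one_mul, trace_diagonal]

theorem st13_herm_t {A : Matrix (Fin p) (Fin p) ℝ} (hA : A.IsHermitian) : Aᵀ = A := by
  have : Aᴴ = Aᵀ := by ext i j; simp [conjTranspose_apply]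
  rw [← this, hA.eq]

theorem st13_vecMul_herm {A : Matrix (Fin p) (Fin p) ℝ} (hA : A.IsHermitian) (x : Fin p → ℝ) :
    x ᵥ* A = A *ᵥ x := by
  rw [← vecMul_transpose, st13_herm_t hA]

theorem st13_scalar_ub {x : ℝ} (h : |x| ≤ 1/32) :
    x - Real.log (1 + x) ≤ (33/62) * x^2 := by
  have h1 : |(-x)| < 1 := by rw [abs_neg]; linarith [abs_nonneg x]
  have key := Real.abs_log_sub_add_sum_range_le h1 2
  have hsum : (∑ i ∈ Finset.range 2, (-x) ^ (i + 1) / (i + 1)) = -x + x^2/2 := by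
    simp [Finset.sum_range_succ]; ring
  rw [hsum, abs_neg] at key
  have h2 : (1 : ℝ) - -x = 1 + x := by ring
  rw [h2] at key
  have h3 : |x|^3 / (1 - |x|) ≤ (1/31) * x^2 := by
    have hx2 : |x|^3 = |x| * x^2 := by
      rw [pow_succ, sq_abs]; ring
    have hd : (31:ℝ)/32 ≤ 1 - |x| := by linarith
    have hpos : (0:ℝ) < 31/32 := by norm_num
    calc |x|^3 / (1 - |x|) ≤ |x|^3 / (31/32) := by
          apply div_le_div_of_nonneg_left (by positivity) hpos hd
      _ = (32/31) * (|x| * x^2) := by rw [hx2]; ring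
      _ ≤ (32/31) * ((1/32) * x^2) := by
          have := mul_le_mul_of_nonneg_right h (sq_nonneg x)
          nlinarith
      _ = (1/31) * x^2 := by ring
  have h4 : -(-x + x^2/2 + Real.log (1+x)) ≤ |x|^3 / (1 - |x|) :=
    (neg_le_abs _).trans key
  nlinarith [h4, h3]

theorem st13_scalar_lb {x : ℝ} (h : |x| ≤ 1/32) : 0 ≤ x - Real.log (1 + x) := by
  have hpos : 0 < 1 + x := by
    have := abs_le.mp h
    linarith
  have := Real.log_le_sub_one_of_pos hpos
  linarith

end Helpers

/-- If `λ_min(Θ₀) ≥ c > 0`, `Δ₀` is symmetric with `‖Δ₀‖₂ ≤ c/32` and `Θ₀ + Δ₀ ≻ 0`, then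
`0 ≤ tr(Δ₀Θ₀⁻¹) − (log det(Θ₀+Δ₀) − log det Θ₀) ≤ ‖Δ₀‖_F²/(2(31c/32)²)`. -/
theorem stmt13 {p : ℕ} [NeZero p] (Θ₀ Δ₀ : Matrix (Fin p) (Fin p) ℝ)
    (h0 : Θ₀.PosDef) (hΔ : Δ₀.IsHermitian) (c : ℝ) (hc : 0 < c)
    (hmin : c ≤ ⨅ i, h0.isHermitian.eigenvalues i)
    (hop : (⨆ i, |hΔ.eigenvalues i|) ≤ c / 32)
    (hpd : (Θ₀ + Δ₀).PosDef) :
    0 ≤ (Δ₀ * Θ₀⁻¹).trace - (Real.log (Θ₀ + Δ₀).det - Real.log Θ₀.det) ∧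
    (Δ₀ * Θ₀⁻¹).trace - (Real.log (Θ₀ + Δ₀).det - Real.log Θ₀.det)
      ≤ frob Δ₀ ^ 2 / (2 * (31 * c / 32) ^ 2) := by
  classical
  -- eigenvalue bounds from csSup/csInf hypotheses
  have hΔev : ∀ i, |hΔ.eigenvalues i| ≤ c/32 := fun i =>
    le_trans (le_ciSup (f := fun i => |hΔ.eigenvalues i|)
      (Set.Finite.bddAbove (Set.finite_range _)) i) hop
  have h0ev : ∀ i, c ≤ h0.isHermitian.eigenvalues i := fun i =>
    hmin.trans (ciInf_le (f := h0.isHermitian.eigenvalues)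
      (Set.Finite.bddBelow (Set.finite_range _)) i)
  -- square root of Θ₀
  set S := CFC.sqrt Θ₀ with hSdef
  have hSps : S.PosSemidef := (CFC.sqrt_nonneg Θ₀).posSemidef
  have hSh : S.IsHermitian := hSps.1
  have hSS : S * S = Θ₀ := CFC.sqrt_mul_sqrt_self Θ₀ h0.posSemidef.nonneg
  have hdetS : S.det ≠ 0 := by
    intro h
    have : Θ₀.det = 0 := by rw [← hSS, det_mul, h, zero_mul]
    exact h0.det_pos.ne' this
  have hSr : S * S⁻¹ = 1 := mul_nonsing_inv S (isUnit_iff_ne_zero.mpr hdetS)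
  have hSl : S⁻¹ * S = 1 := nonsing_inv_mul S (isUnit_iff_ne_zero.mpr hdetS)
  have hSinvh : S⁻¹.IsHermitian := hSh.inv
  have hΘinv : Θ₀⁻¹ = S⁻¹ * S⁻¹ := by rw [← hSS, Matrix.mul_inv_rev]
  -- the matrix M
  set M := S⁻¹ * Δ₀ * S⁻¹ with hMdef
  have hMh : M.IsHermitian := by
    unfold Matrix.IsHermitian
    rw [hMdef, conjTranspose_mul, conjTranspose_mul, hSinvh.eq, hΔ.eq, mul_assoc]
  set μ := hMh.eigenvalues with hμdef
  have hofR : (RCLike.ofReal ∘ μ : Fin p → ℝ) = μ := by ext i; simp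
  have hMspec : M = (hMh.eigenvectorUnitary : Matrix (Fin p) (Fin p) ℝ) * diagonal μ *
      star (hMh.eigenvectorUnitary : Matrix (Fin p) (Fin p) ℝ) := by
    nth_rewrite 1 [hMh.spectral_theorem]
    rw [Unitary.conjStarAlgAut_apply, hofR]
  -- Key 3: |μ i| ≤ 1/32
  have hμb : ∀ i, |μ i| ≤ 1/32 := by
    intro i
    set v : Fin p → ℝ := ⇑(hMh.eigenvectorBasis i) with hvdef
    have hv0 : v ≠ 0 := by
      intro h
      exact hMh.eigenvectorBasis.orthonormal.ne_zero i (by ext j; exact congrFun h j)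
    have hvv : 0 < v ⬝ᵥ v := by
      rcases Function.ne_iff.mp hv0 with ⟨j, hj⟩
      refine Finset.sum_pos' (fun k _ => mul_self_nonneg _) ⟨j, Finset.mem_univ j, ?_⟩
      exact mul_self_pos.mpr hj
    have heig : M *ᵥ v = μ i • v := hMh.mulVec_eigenvectorBasis i
    have hquad : v ⬝ᵥ M *ᵥ v = μ i * (v ⬝ᵥ v) := by
      rw [heig, dotProduct_smul, smul_eq_mul]
    set y := S⁻¹ *ᵥ v with hydef
    have hSy : S *ᵥ y = v := by rw [hydef, mulVec_mulVec, hSr, one_mulVec]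
    have hform : v ⬝ᵥ M *ᵥ v = y ⬝ᵥ Δ₀ *ᵥ y := by
      have h1 : M *ᵥ v = S⁻¹ *ᵥ (Δ₀ *ᵥ y) := by
        rw [hMdef, hydef, ← mulVec_mulVec, ← mulVec_mulVec]
      rw [h1, dotProduct_mulVec, st13_vecMul_herm hSinvh, ← hydef]
    have hvv2 : v ⬝ᵥ v = y ⬝ᵥ Θ₀ *ᵥ y := by
      conv_lhs => rw [← hSy]
      rw [dotProduct_mulVec, st13_vecMul_herm hSh, mulVec_mulVec, hSS, dotProduct_comm]
    have hub : y ⬝ᵥ Δ₀ *ᵥ y ≤ (c/32) * (y ⬝ᵥ y) :=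
      st13_quad_le hΔ (fun k => (abs_le.mp (hΔev k)).2) y
    have hlb : -(c/32) * (y ⬝ᵥ y) ≤ y ⬝ᵥ Δ₀ *ᵥ y :=
      st13_le_quad hΔ (fun k => neg_le_of_abs_le (hΔev k)) y
    have hyv : c * (y ⬝ᵥ y) ≤ v ⬝ᵥ v := by
      rw [hvv2]; exact st13_le_quad h0.isHermitian h0ev y
    have hynn : 0 ≤ y ⬝ᵥ y := Finset.sum_nonneg fun k _ => mul_self_nonneg _
    have key : |μ i * (v ⬝ᵥ v)| ≤ (1/32) * (v ⬝ᵥ v) := by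
      rw [← hquad, hform]
      rw [abs_le]
      constructor
      · nlinarith
      · nlinarith
    rw [abs_mul, abs_of_pos hvv] at key
    exact le_of_mul_le_mul_right (by rw [mul_comm (1/32)] at key ⊢; exact key) hvv
  have hpos1 : ∀ i, 0 < 1 + μ i := fun i => by
    have := abs_le.mp (hμb i); linarith
  -- Key 1: trace identity
  have htr : (Δ₀ * Θ₀⁻¹).trace = ∑ i, μ i := by
    have h1 : Δ₀ * Θ₀⁻¹ = Δ₀ * S⁻¹ * S⁻¹ := by rw [hΘinv, mul_assoc]
    rw [h1, trace_mul_cycle, ← hMdef, hMspec, st13_trace_conj]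
  -- Key 2: determinant identity
  have hdet : (Θ₀ + Δ₀).det = Θ₀.det * ∏ i, (1 + μ i) := by
    have hSMS : S * M * S = Δ₀ := by
      have : S * M * S = (S * S⁻¹) * Δ₀ * (S⁻¹ * S) := by
        rw [hMdef]; simp only [← mul_assoc]
      rw [this, hSr, hSl, one_mul, mul_one]
    have hfact : Θ₀ + Δ₀ = S * (1 + M) * S := by
      rw [mul_add, add_mul, mul_one, hSS, hSMS]
    have hdet1M : (1 + M).det = ∏ i, (1 + μ i) := by
      set V := (hMh.eigenvectorUnitary : Matrix (Fin p) (Fin p) ℝ)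
      have hUV : V * star V = 1 := (Matrix.mem_unitaryGroup_iff).mp hMh.eigenvectorUnitary.2
      have h1M : (1 : Matrix (Fin p) (Fin p) ℝ) + M = V * (1 + diagonal μ) * star V := by
        rw [mul_add, add_mul, mul_one, hUV, hMspec]
      rw [h1M, det_mul, det_mul]
      have : V.det * (1 + diagonal μ).det * (star V).det
          = (1 + diagonal μ).det * (V * star V).det := by
        rw [det_mul]; ring
      rw [this, hUV, det_one, mul_one]
      have : (1 : Matrix (Fin p) (Fin p) ℝ) + diagonal μ = diagonal (fun i => 1 + μ i) := by
        rw [← diagonal_one, diagonal_add]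
      rw [this, det_diagonal]
    rw [hfact, det_mul, det_mul, hdet1M]
    rw [show S.det * (∏ i, (1 + μ i)) * S.det = S.det * S.det * ∏ i, (1 + μ i) by ring,
      ← det_mul, hSS]
  have hlogdet : Real.log (Θ₀ + Δ₀).det - Real.log Θ₀.det = ∑ i, Real.log (1 + μ i) := by
    have hprodne : (∏ i, (1 + μ i)) ≠ 0 :=
      Finset.prod_ne_zero_iff.mpr fun i _ => (hpos1 i).ne'
    rw [hdet, Real.log_mul h0.det_pos.ne' hprodne,
      Real.log_prod (fun i _ => (hpos1 i).ne')]
    ring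
  -- Key 4: sum of squares bound
  have hfrobsq : 0 ≤ ∑ i, ∑ j, (Δ₀ i j)^2 :=
    Finset.sum_nonneg fun i _ => Finset.sum_nonneg fun j _ => sq_nonneg _
  have hsumsq : ∑ i, (μ i)^2 ≤ (∑ i, ∑ j, (Δ₀ i j)^2) / c^2 := by
    -- trace(M*M) = ∑ μ²
    have htrMM : (M * M).trace = ∑ i, (μ i)^2 := by
      rw [hMspec, st13_conj_mul_conj, st13_trace_conj]
      exact Finset.sum_congr rfl fun i _ => (sq (μ i)).symm
    -- trace(M*M) = trace(Θ₀⁻¹ * (Δ₀ * Θ₀⁻¹ * Δ₀))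
    have hcyc : (M * M).trace = (Θ₀⁻¹ * (Δ₀ * Θ₀⁻¹ * Δ₀)).trace := by
      have h1 : M * M = (S⁻¹ * (Δ₀ * Θ₀⁻¹ * Δ₀)) * S⁻¹ := by
        rw [hMdef, hΘinv]; simp only [← mul_assoc]
      rw [h1, trace_mul_comm, ← mul_assoc, ← hΘinv]
    -- quadratic form bound for Θ₀⁻¹
    have hΘinvspec : Θ₀⁻¹ = (h0.isHermitian.eigenvectorUnitary : Matrix (Fin p) (Fin p) ℝ) *
        diagonal (fun i => (h0.isHermitian.eigenvalues i)⁻¹) *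
        star (h0.isHermitian.eigenvectorUnitary : Matrix (Fin p) (Fin p) ℝ) := by
      have hofR0 : (RCLike.ofReal ∘ h0.isHermitian.eigenvalues : Fin p → ℝ)
          = h0.isHermitian.eigenvalues := by ext i; simp
      refine inv_eq_right_inv ?_
      nth_rewrite 1 [h0.isHermitian.spectral_theorem]
      rw [Unitary.conjStarAlgAut_apply, hofR0, st13_conj_mul_conj]
      have : (h0.isHermitian.eigenvalues * fun i => (h0.isHermitian.eigenvalues i)⁻¹)
          = fun _ => (1:ℝ) := by
        ext i
        exact mul_inv_cancel₀ (lt_of_lt_of_le hc (h0ev i)).ne'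
      rw [this, diagonal_one, mul_one,
        (Matrix.mem_unitaryGroup_iff).mp h0.isHermitian.eigenvectorUnitary.2]
    have hCq : ∀ x, x ⬝ᵥ Θ₀⁻¹ *ᵥ x ≤ (1/c) * (x ⬝ᵥ x) := by
      intro x
      rw [hΘinvspec, st13_quad_conj, ← st13_norm_conj h0.isHermitian.eigenvectorUnitary x,
        Finset.mul_sum]
      refine Finset.sum_le_sum fun i _ => mul_le_mul_of_nonneg_right ?_ (sq_nonneg _)
      rw [one_div]
      exact inv_anti₀ hc (h0ev i)
    have hXpsd : (Δ₀ * Θ₀⁻¹ * Δ₀).PosSemidef := by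
      have := (h0.inv.posSemidef).conjTranspose_mul_mul_same Δ₀
      rwa [hΔ.eq] at this
    have hstep1 : (Θ₀⁻¹ * (Δ₀ * Θ₀⁻¹ * Δ₀)).trace ≤ (1/c) * (Δ₀ * Θ₀⁻¹ * Δ₀).trace :=
      st13_trace_mul_le h0.inv.isHermitian hCq hXpsd
    have hΔΔpsd : (Δ₀ * Δ₀).PosSemidef := by
      have := posSemidef_conjTranspose_mul_self Δ₀
      rwa [hΔ.eq] at this
    have hstep2 : (Δ₀ * Θ₀⁻¹ * Δ₀).trace ≤ (1/c) * (Δ₀ * Δ₀).trace := by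
      have hcyc2 : (Δ₀ * Θ₀⁻¹ * Δ₀).trace = (Θ₀⁻¹ * (Δ₀ * Δ₀)).trace := by
        rw [trace_mul_cycle, trace_mul_comm]
      rw [hcyc2]
      exact st13_trace_mul_le h0.inv.isHermitian hCq hΔΔpsd
    have htrΔΔ : (Δ₀ * Δ₀).trace = ∑ i, ∑ j, (Δ₀ i j)^2 := by
      simp only [Matrix.trace, Matrix.diag, Matrix.mul_apply]
      refine Finset.sum_congr rfl fun i _ => Finset.sum_congr rfl fun j _ => ?_
      have hsym : Δ₀ j i = Δ₀ i j := by
        have := congrFun (congrFun hΔ.eq i) j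
        simpa [conjTranspose_apply] using this
      rw [hsym, sq]
    calc ∑ i, (μ i)^2 = (M*M).trace := htrMM.symm
      _ = (Θ₀⁻¹ * (Δ₀ * Θ₀⁻¹ * Δ₀)).trace := hcyc
      _ ≤ (1/c) * (Δ₀ * Θ₀⁻¹ * Δ₀).trace := hstep1
      _ ≤ (1/c) * ((1/c) * (Δ₀ * Δ₀).trace) :=
          mul_le_mul_of_nonneg_left hstep2 (by positivity)
      _ = (∑ i, ∑ j, (Δ₀ i j)^2) / c^2 := by
          rw [htrΔΔ]
          field_simp
  -- final assembly
  have hexpr : (Δ₀ * Θ₀⁻¹).trace - (Real.log (Θ₀ + Δ₀).det - Real.log Θ₀.det)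
      = ∑ i, (μ i - Real.log (1 + μ i)) := by
    rw [htr, hlogdet, Finset.sum_sub_distrib]
  have hcne : c ≠ 0 := hc.ne'
  constructor
  · rw [hexpr]
    exact Finset.sum_nonneg fun i _ => st13_scalar_lb (hμb i)
  · rw [hexpr]
    have hfrob : frob Δ₀ ^ 2 = ∑ i, ∑ j, (Δ₀ i j)^2 := Real.sq_sqrt hfrobsq
    calc ∑ i, (μ i - Real.log (1 + μ i)) ≤ ∑ i, (33/62) * (μ i)^2 :=
          Finset.sum_le_sum fun i _ => st13_scalar_ub (hμb i)
      _ = (33/62) * ∑ i, (μ i)^2 := (Finset.mul_sum _ _ _).symm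
      _ ≤ (33/62) * ((∑ i, ∑ j, (Δ₀ i j)^2) / c^2) :=
          mul_le_mul_of_nonneg_left hsumsq (by norm_num)
      _ ≤ (512/961) * ((∑ i, ∑ j, (Δ₀ i j)^2) / c^2) :=
          mul_le_mul_of_nonneg_right (by norm_num) (by positivity)
      _ = frob Δ₀ ^ 2 / (2 * (31 * c / 32) ^ 2) := by
          rw [hfrob]
          field_simp
          ring
end
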